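/- In the setting of a Manin triple L × L^‡ = D ⊕ W with W commensurable with W°, let V_± ⊆ L be the preimages of the projections W_± under the isomorphisms L → L_±. Then L = V_+ + V_−, and the linear map V_+ ∩ V_− → (W_+ × W_−)/W, f ↦ class of (f, f^‡), is an isomorphism of vector spaces. -/

import Mathlib

open TensorProduct LaurentPolynomial

set_option maxSynthPendingDepth 3

noncomputable section

/-- The `ε^k`-eigenspace of the automorphism `σ`. -/
def eigSp {g : Type*} [LieRing g] [LieAlgebra ℂ g]
    (σ : g ≃ₗ⁅ℂ⁆ g) (ε : ℂ) (k : ℤ) : Submodule ℂ g :=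
  LinearMap.ker (σ.toLinearEquiv.toLinearMap - ε ^ k • LinearMap.id)

variable (g : Type*) [LieRing g] [LieAlgebra ℂ g]

/-- The full loop algebra `g[z, z⁻¹] = ℂ[z,z⁻¹] ⊗ g`. -/
abbrev LoopAlg := LaurentPolynomial ℂ ⊗[ℂ] g

/-- The residue pairing on `ℂ[z,z⁻¹]`: `(p, q) ↦` coefficient of `z⁰` in `p·q`. -/
def resPair : LinearMap.BilinForm ℂ (LaurentPolynomial ℂ) :=
  LinearMap.mk₂ ℂ (fun p q => (p * q).coeff 0)
    (fun p p' q => by (try simp only []); rw [add_mul, AddMonoidAlgebra.coeff_add]; exact Finsupp.add_apply _ _ 0)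
    (fun c p q => by (try simp only []); rw [smul_mul_assoc, AddMonoidAlgebra.coeff_smul]; exact Finsupp.smul_apply c _ 0)
    (fun p q q' => by (try simp only []); rw [mul_add, AddMonoidAlgebra.coeff_add]; exact Finsupp.add_apply _ _ 0)
    (fun c p q => by (try simp only []); rw [mul_smul_comm, AddMonoidAlgebra.coeff_smul]; exact Finsupp.smul_apply c _ 0)

/-- The standard bilinear form `B(a z^k, b z^l) = κ(a,b) δ_{k+l,0}` on the loop algebra. -/
def loopForm : LinearMap.BilinForm ℂ (LoopAlg g) :=
  LinearMap.BilinForm.tmul (resPair) (killingForm ℂ g)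

/-- The dagger map `a z^k ↦ a z^{−k}`, an isometric Lie algebra isomorphism
`L(g,σ) → L(g,σ⁻¹)`. -/
def daggerMap : LoopAlg g →ₗ[ℂ] LoopAlg g :=
  TensorProduct.map (LaurentPolynomial.invert (R := ℂ)).toLinearMap LinearMap.id

/-- The bilinear form `F((f₊,f₋),(g₊,g₋)) = B(f₊,g₊) − B(f₋,g₋)` on `L × L^‡`. -/
def prodForm : LinearMap.BilinForm ℂ (LoopAlg g × LoopAlg g) :=
  ((loopForm g).compl₁₂ (LinearMap.fst ℂ (LoopAlg g) (LoopAlg g))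
      (LinearMap.fst ℂ (LoopAlg g) (LoopAlg g))) -
  ((loopForm g).compl₁₂ (LinearMap.snd ℂ (LoopAlg g) (LoopAlg g))
      (LinearMap.snd ℂ (LoopAlg g) (LoopAlg g)))

variable {g}

/-- The degree `k` component `g_k z^k` of the twisted loop algebra `L(g,σ)`. -/
def loopComp (σ : g ≃ₗ⁅ℂ⁆ g) (ε : ℂ) (k : ℤ) : Submodule ℂ (LoopAlg g) :=
  Submodule.map (TensorProduct.mk ℂ (LaurentPolynomial ℂ) g (T k)) (eigSp σ ε k)

/-- The degree `k` component `g_k^‡ z^k` of the twisted loop algebra `L(g,σ⁻¹)`. -/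
def loopCompDag (σ : g ≃ₗ⁅ℂ⁆ g) (ε : ℂ) (k : ℤ) : Submodule ℂ (LoopAlg g) :=
  Submodule.map (TensorProduct.mk ℂ (LaurentPolynomial ℂ) g (T k)) (eigSp σ ε (-k))

/-- The twisted loop algebra `L(g,σ) = ⊕_{k∈ℤ} g_k z^k`. -/
def loopCarrier (σ : g ≃ₗ⁅ℂ⁆ g) (ε : ℂ) : Submodule ℂ (LoopAlg g) :=
  ⨆ k : ℤ, loopComp σ ε k

/-- The twisted loop algebra `L^‡ = L(g,σ⁻¹) = ⊕_{k∈ℤ} g_k^‡ z^k`. -/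
def loopDagCarrier (σ : g ≃ₗ⁅ℂ⁆ g) (ε : ℂ) : Submodule ℂ (LoopAlg g) :=
  ⨆ k : ℤ, loopCompDag σ ε k

/-- `L_{≥ n} = t^n·L_{≥0}` inside `L(g,σ)`. -/
def loopGe (σ : g ≃ₗ⁅ℂ⁆ g) (ε : ℂ) (m : ℕ) (n : ℤ) : Submodule ℂ (LoopAlg g) :=
  ⨆ j : ℤ, ⨆ _ : n * (m : ℤ) ≤ j, loopComp σ ε j

/-- `L^‡_{≥ n}` inside `L(g,σ⁻¹)`. -/
def loopGeDag (σ : g ≃ₗ⁅ℂ⁆ g) (ε : ℂ) (m : ℕ) (n : ℤ) : Submodule ℂ (LoopAlg g) :=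
  ⨆ j : ℤ, ⨆ _ : n * (m : ℤ) ≤ j, loopCompDag σ ε j

/-- The diagonal `D = {(f, f^‡) | f ∈ L}` in `L × L^‡`. -/
def loopDiag (σ : g ≃ₗ⁅ℂ⁆ g) (ε : ℂ) : Submodule ℂ (LoopAlg g × LoopAlg g) :=
  Submodule.map (LinearMap.prod LinearMap.id (daggerMap g)) (loopCarrier σ ε)

/-- The standard complementary Lagrangian subalgebra `W°`, attached to a triangular
decomposition `g₀ = g₀⁺ ⊕ h ⊕ g₀⁻`:
`W° = {(f₊,f₋) ∈ B₊ × B₋ | π₊(f₊) + π₋(f₋) = 0}`. -/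
def stdW (σ : g ≃ₗ⁅ℂ⁆ g) (ε : ℂ) (gp hC gm : Submodule ℂ g) :
    Submodule ℂ (LoopAlg g × LoopAlg g) :=
  ((Submodule.map (TensorProduct.mk ℂ (LaurentPolynomial ℂ) g (T 0)) gp ⊔
      (⨆ j : ℤ, ⨆ _ : 1 ≤ j, loopComp σ ε j)).prod ⊥) ⊔
  (Submodule.prod ⊥ (Submodule.map (TensorProduct.mk ℂ (LaurentPolynomial ℂ) g (T 0)) gm ⊔
      (⨆ j : ℤ, ⨆ _ : 1 ≤ j, loopCompDag σ ε j))) ⊔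
  Submodule.map
    (LinearMap.prod (TensorProduct.mk ℂ (LaurentPolynomial ℂ) g (T 0))
      (-(TensorProduct.mk ℂ (LaurentPolynomial ℂ) g (T 0)))) hC

/-- Commensurability of two subspaces: `(W' + W'')/(W' ∩ W'')` is finite dimensional. -/
def Commens {k V : Type*} [Field k] [AddCommGroup V] [Module k V]
    (W' W'' : Submodule k V) : Prop :=
  FiniteDimensional k (↥(W' ⊔ W'') ⧸ Submodule.comap (W' ⊔ W'').subtype (W' ⊓ W''))

end

/-- In the setting of a Manin triple `L × L^‡ = D ∔ W` with `W` commensurable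
with `W°`, let `V_± ⊆ L` be the preimages of the projections `W_±` under the isomorphisms
`L → L_±`.  Then `L = V₊ + V₋`, and `f ↦ (f, f^‡) mod W` is an isomorphism
`V₊ ∩ V₋ ≅ (W₊ × W₋)/W`. -/
theorem maninTriple_V_sum_and_quotient
    {g : Type*} [LieRing g] [LieAlgebra ℂ g]
    [Module.Finite ℂ g] [LieAlgebra.IsSimple ℂ g]
    (m : ℕ) (hm : 0 < m)
    (σ : g ≃ₗ⁅ℂ⁆ g) (hσ : ∀ x : g, (⇑σ)^[m] x = x)
    (ε : ℂ) (hε : IsPrimitiveRoot ε m)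
    -- a triangular decomposition g₀ = g₀⁺ ⊕ h ⊕ g₀⁻
    (gp hC gm : Submodule ℂ g)
    (hdec : gp ⊔ hC ⊔ gm = eigSp σ ε 0)
    (hd1 : Disjoint gp (hC ⊔ gm)) (hd2 : Disjoint hC gm)
    -- the Manin triple M = D ∔ W
    (W : Submodule ℂ (LoopAlg g × LoopAlg g))
    (hWsub : W ≤ (loopCarrier σ ε).prod (loopDagCarrier σ ε))
    (hWlie : ∀ x ∈ W, ∀ y ∈ W, (⁅Prod.fst x, Prod.fst y⁆, ⁅Prod.snd x, Prod.snd y⁆) ∈ W)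
    (hWiso : ∀ x ∈ W, ∀ y ∈ W, prodForm g x y = 0)
    (hWcoiso : ∀ x ∈ (loopCarrier σ ε).prod (loopDagCarrier σ ε),
      (∀ y ∈ W, prodForm g x y = 0) → x ∈ W)
    (hdisj : Disjoint (loopDiag σ ε) W)
    (hsup : loopDiag σ ε ⊔ W = (loopCarrier σ ε).prod (loopDagCarrier σ ε))
    (hcomm : Commens W (stdW σ ε gp hC gm)) :
    Submodule.map (LinearMap.fst ℂ _ _) W ⊔
      (loopCarrier σ ε ⊓ Submodule.comap (daggerMap g) (Submodule.map (LinearMap.snd ℂ _ _) W))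
      = loopCarrier σ ε ∧
    ∃ e : ↥(Submodule.map (LinearMap.fst ℂ _ _) W ⊓
            (loopCarrier σ ε ⊓
              Submodule.comap (daggerMap g) (Submodule.map (LinearMap.snd ℂ _ _) W))) ≃ₗ[ℂ]
          (↥((Submodule.map (LinearMap.fst ℂ _ _) W).prod
              (Submodule.map (LinearMap.snd ℂ _ _) W)) ⧸
            Submodule.comap ((Submodule.map (LinearMap.fst ℂ _ _) W).prod
              (Submodule.map (LinearMap.snd ℂ _ _) W)).subtype W),
      ∀ (x : ↥(Submodule.map (LinearMap.fst ℂ _ _) W ⊓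
            (loopCarrier σ ε ⊓
              Submodule.comap (daggerMap g) (Submodule.map (LinearMap.snd ℂ _ _) W))))
        (y : ↥((Submodule.map (LinearMap.fst ℂ _ _) W).prod
              (Submodule.map (LinearMap.snd ℂ _ _) W))),
        (y : LoopAlg g × LoopAlg g) = ((x : LoopAlg g), daggerMap g (x : LoopAlg g)) →
          e x = Submodule.Quotient.mk y := by
  classical
  set L := loopCarrier σ ε with hL
  set Ld := loopDagCarrier σ ε with hLd
  set Wp := Submodule.map (LinearMap.fst ℂ (LoopAlg g) (LoopAlg g)) W with hWp
  set Wm := Submodule.map (LinearMap.snd ℂ (LoopAlg g) (LoopAlg g)) W with hWm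
  have hWpL : Wp ≤ L := by
    rintro _ ⟨w, hw, rfl⟩
    exact (hWsub hw).1
  have hWmL : Wm ≤ Ld := by
    rintro _ ⟨w, hw, rfl⟩
    exact (hWsub hw).2
  set Vm := L ⊓ Submodule.comap (daggerMap g) Wm with hVm
  constructor
  · apply le_antisymm
    · exact sup_le hWpL inf_le_left
    · intro f hf
      have hf0 : ((f, 0) : LoopAlg g × LoopAlg g) ∈ loopDiag σ ε ⊔ W := by
        rw [hsup]; exact ⟨hf, Submodule.zero_mem _⟩
      obtain ⟨d, hd, w, hw, hdw⟩ := Submodule.mem_sup.mp hf0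
      obtain ⟨a, ha, rfl⟩ := hd
      have h1 : a + w.1 = f := congrArg Prod.fst hdw
      have h2 : daggerMap g a + w.2 = 0 := congrArg Prod.snd hdw
      have haV : a ∈ Vm := by
        refine ⟨ha, ?_⟩
        have hda : daggerMap g a = -w.2 := eq_neg_of_add_eq_zero_left h2
        exact Submodule.mem_comap.mpr (hda ▸ Wm.neg_mem ⟨w, hw, rfl⟩)
      refine Submodule.mem_sup.mpr ⟨w.1, ⟨w, hw, rfl⟩, a, haV, ?_⟩
      rw [add_comm]; exact h1
  · set K := Wp.prod Wm with hK
    set N := Submodule.comap K.subtype W with hN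
    have hmem : ∀ x : ↥(Wp ⊓ Vm), ((x : LoopAlg g), daggerMap g (x : LoopAlg g)) ∈ K :=
      fun x => ⟨x.2.1, x.2.2.2⟩
    let ψ : ↥(Wp ⊓ Vm) →ₗ[ℂ] ↥K :=
      { toFun := fun x => ⟨((x : LoopAlg g), daggerMap g (x : LoopAlg g)), hmem x⟩
        map_add' := by intro a b; ext <;> simp
        map_smul' := by intro c a; ext <;> simp }
    let φ := N.mkQ.comp ψ
    have hinj : Function.Injective φ := by
      rw [← LinearMap.ker_eq_bot, LinearMap.ker_eq_bot']
      intro x hx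
      have hx' : ψ x ∈ N := (Submodule.Quotient.mk_eq_zero N).mp hx
      have hxW : ((x : LoopAlg g), daggerMap g (x : LoopAlg g)) ∈ W := hx'
      have hxD : ((x : LoopAlg g), daggerMap g (x : LoopAlg g)) ∈ loopDiag σ ε :=
        ⟨(x : LoopAlg g), x.2.2.1, rfl⟩
      have : ((x : LoopAlg g), daggerMap g (x : LoopAlg g)) ∈
          loopDiag σ ε ⊓ W := ⟨hxD, hxW⟩
      rw [hdisj.eq_bot] at this
      have hx0 : (x : LoopAlg g) = 0 := congrArg Prod.fst this
      exact Subtype.ext hx0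
    have hsurj : Function.Surjective φ := by
      intro q
      obtain ⟨y, rfl⟩ := Submodule.Quotient.mk_surjective N q
      obtain ⟨w, hw, hw1⟩ := y.2.1
      have hy2 : (y : LoopAlg g × LoopAlg g).2 ∈ Wm := y.2.2
      have h0 : ((0, (y : LoopAlg g × LoopAlg g).2 - w.2) : LoopAlg g × LoopAlg g) ∈
          loopDiag σ ε ⊔ W := by
        rw [hsup]
        exact ⟨L.zero_mem, Ld.sub_mem (hWmL hy2) (hWmL ⟨w, hw, rfl⟩)⟩
      obtain ⟨d, hd, u, hu, hdu⟩ := Submodule.mem_sup.mp h0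
      obtain ⟨a, ha, rfl⟩ := hd
      have h1 : a + u.1 = 0 := congrArg Prod.fst hdu
      have h2 : daggerMap g a + u.2 = (y : LoopAlg g × LoopAlg g).2 - w.2 :=
        congrArg Prod.snd hdu
      have haWp : a ∈ Wp := by
        have ha1 : a = -u.1 := eq_neg_of_add_eq_zero_left h1
        exact ha1 ▸ Wp.neg_mem ⟨u, hu, rfl⟩
      have haWm : daggerMap g a ∈ Wm := by
        have : daggerMap g a = (y : LoopAlg g × LoopAlg g).2 - w.2 - u.2 := by
          rw [← h2]; abel
        rw [this]
        exact Wm.sub_mem (Wm.sub_mem hy2 ⟨w, hw, rfl⟩) ⟨u, hu, rfl⟩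
      refine ⟨⟨a, haWp, ha, haWm⟩, ?_⟩
      show Submodule.Quotient.mk (ψ _) = Submodule.Quotient.mk y
      rw [Submodule.Quotient.eq]
      show ((a, daggerMap g a) - (y : LoopAlg g × LoopAlg g)) ∈ W
      have hy1 : (y : LoopAlg g × LoopAlg g).1 = w.1 := hw1.symm
      have heq : ((a, daggerMap g a) - (y : LoopAlg g × LoopAlg g)) = -(w + u) := by
        ext
        · show a - (y : LoopAlg g × LoopAlg g).1 = -(w + u).1
          have : a = -u.1 := eq_neg_of_add_eq_zero_left h1
          rw [hy1, this, Prod.fst_add]; abel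
        · show daggerMap g a - (y : LoopAlg g × LoopAlg g).2 = -(w + u).2
          have : daggerMap g a = (y : LoopAlg g × LoopAlg g).2 - w.2 - u.2 := by
            rw [← h2]; abel
          rw [this, Prod.snd_add]; abel
      rw [heq]
      exact W.neg_mem (W.add_mem hw hu)
    refine ⟨LinearEquiv.ofBijective φ ⟨hinj, hsurj⟩, ?_⟩
    intro x y hy
    show φ x = Submodule.Quotient.mk y
    show Submodule.Quotient.mk (ψ x) = Submodule.Quotient.mk y
    congr 1
    exact Subtype.ext hy.symm
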